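/- Let P' := { x ∈ ℝ^4 : x_1 ≤ 0 and 3x_1 ≤ x_2 + x_3 + x_4 }, regarded as a subset of l∞^4. Then the map r : l∞^4 → P' defined by r(x_1,x_2,x_3,x_4) := ( min{ x_1, 0, (x_2 + x_3 + x_4)/3 }, x_2, x_3, x_4 ) is a 1-Lipschitz retraction of l∞^4 onto P' (i.e. r is 1-Lipschitz, r(l∞^4) ⊂ P' and r|_{P'} = id); consequently P' is injective. -/

import Mathlib

open Set Metric

/-- A metric space `X` is *injective* if for all metric spaces `A`, `B`, every isometric
embedding `i : A → B` and every `1`-Lipschitz map `f : A → X`, there is a `1`-Lipschitz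
map `g : B → X` with `g ∘ i = f`. -/
def IsInjectiveMetricSpace (X : Type) [MetricSpace X] : Prop :=
  ∀ (A B : Type) [MetricSpace A] [MetricSpace B], ∀ (i : A → B) (f : A → X),
    Isometry i → LipschitzWith 1 f →
      ∃ g : B → X, LipschitzWith 1 g ∧ ∀ a, g (i a) = f a

/-- A subset of `l∞ⁿ = (Fin n → ℝ)` (whose product metric is the sup-metric) is injective
if it is an injective metric space with the induced metric. -/
def IsInjectiveSubset {n : ℕ} (S : Set (Fin n → ℝ)) : Prop :=
  IsInjectiveMetricSpace S

/-- `l∞ⁿ` is an injective metric space. -/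
lemma linf_injective (n : ℕ) : IsInjectiveMetricSpace (Fin n → ℝ) := by
  intro A B _ _ i f hi hf
  classical
  set F : B → (Fin n → ℝ) := fun b => if h : ∃ a, i a = b then f h.choose else 0 with hF
  have hFlip : LipschitzOnWith 1 F (range i) := by
    apply LipschitzOnWith.of_dist_le_mul
    rintro x ⟨a1, rfl⟩ y ⟨a2, rfl⟩
    have h1 : ∃ a, i a = i a1 := ⟨a1, rfl⟩
    have h2 : ∃ a, i a = i a2 := ⟨a2, rfl⟩
    have e1 : h1.choose = a1 := hi.injective h1.choose_spec
    have e2 : h2.choose = a2 := hi.injective h2.choose_spec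
    simp only [hF, dif_pos h1, dif_pos h2, e1, e2, NNReal.coe_one, one_mul]
    calc dist (f a1) (f a2) ≤ dist a1 a2 := by
          simpa using hf.dist_le_mul a1 a2
      _ = dist (i a1) (i a2) := (hi.dist_eq a1 a2).symm
  obtain ⟨g, hg, hgF⟩ := hFlip.extend_pi
  refine ⟨g, hg, fun a => ?_⟩
  have h1 : ∃ a', i a' = i a := ⟨a, rfl⟩
  have : g (i a) = F (i a) := (hgF ⟨a, rfl⟩).symm
  rw [this, hF]
  simp only [dif_pos h1, hi.injective h1.choose_spec]

theorem retract_onto_P'_injective (P' : Set (Fin 4 → ℝ))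
    (hP' : P' = {x | x 0 ≤ 0 ∧ 3 * x 0 ≤ x 1 + x 2 + x 3})
    (r : (Fin 4 → ℝ) → (Fin 4 → ℝ))
    (hr : r = fun x i =>
      if i = 0 then min (x 0) (min 0 ((x 1 + x 2 + x 3) / 3)) else x i) :
    LipschitzWith 1 r ∧ (∀ x, r x ∈ P') ∧ (∀ x ∈ P', r x = x) ∧
      IsInjectiveSubset P' := by
  have hlip : LipschitzWith 1 r := by
    apply LipschitzWith.of_dist_le_mul
    intro x y
    rw [NNReal.coe_one, one_mul]
    rw [dist_pi_le_iff dist_nonneg]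
    intro j
    have hd : ∀ k : Fin 4, |x k - y k| ≤ dist x y := fun k => by
      rw [← Real.dist_eq]; exact dist_le_pi_dist x y k
    by_cases hj : j = 0
    · subst hj
      simp only [hr, if_pos rfl, Real.dist_eq]
      have h3 : |(x 1 + x 2 + x 3) / 3 - (y 1 + y 2 + y 3) / 3| ≤ dist x y := by
        rw [div_sub_div_same, abs_div, abs_of_pos (by norm_num : (0:ℝ) < 3),
          div_le_iff₀ (by norm_num : (0:ℝ) < 3)]
        calc |x 1 + x 2 + x 3 - (y 1 + y 2 + y 3)|
            = |(x 1 - y 1) + (x 2 - y 2) + (x 3 - y 3)| := by ring_nf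
          _ ≤ |x 1 - y 1| + |x 2 - y 2| + |x 3 - y 3| := by
              exact (abs_add_le _ _).trans (by gcongr; exact abs_add_le _ _)
          _ ≤ dist x y + dist x y + dist x y := by gcongr <;> exact hd _
          _ = dist x y * 3 := by ring
      calc |min (x 0) (min 0 ((x 1 + x 2 + x 3) / 3))
            - min (y 0) (min 0 ((y 1 + y 2 + y 3) / 3))|
          ≤ max |x 0 - y 0| |min 0 ((x 1 + x 2 + x 3) / 3)
              - min 0 ((y 1 + y 2 + y 3) / 3)| := abs_min_sub_min_le_max _ _ _ _
        _ ≤ dist x y := by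
            apply max_le (hd 0)
            calc |min 0 ((x 1 + x 2 + x 3) / 3) - min 0 ((y 1 + y 2 + y 3) / 3)|
                ≤ max |(0:ℝ) - 0| |(x 1 + x 2 + x 3) / 3 - (y 1 + y 2 + y 3) / 3| :=
                  abs_min_sub_min_le_max _ _ _ _
              _ ≤ dist x y := by
                  apply max_le _ h3
                  simpa using dist_nonneg (x := x) (y := y)
    · simp only [hr, if_neg hj, Real.dist_eq]
      exact hd j
  have hmem : ∀ x, r x ∈ P' := by
    intro x
    rw [hP']
    constructor
    · simp only [hr, if_pos rfl]
      calc min (x 0) (min 0 ((x 1 + x 2 + x 3) / 3)) ≤ min 0 ((x 1 + x 2 + x 3) / 3) :=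
          min_le_right _ _
        _ ≤ 0 := min_le_left _ _
    · simp only [hr]
      norm_num
      calc 3 * min (x 0) (min 0 ((x 1 + x 2 + x 3) / 3))
          ≤ 3 * ((x 1 + x 2 + x 3) / 3) := by
            gcongr
            exact (min_le_right _ _).trans (min_le_right _ _)
        _ = x 1 + x 2 + x 3 := by ring
  have hfix : ∀ x ∈ P', r x = x := by
    intro x hx
    rw [hP'] at hx
    funext j
    by_cases hj : j = 0
    · subst hj
      simp only [hr, if_pos rfl]
      apply min_eq_left
      apply le_min (hx.1)
      linarith [hx.2]
    · simp only [hr, if_neg hj]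
  refine ⟨hlip, hmem, hfix, ?_⟩
  -- Injectivity of P' as a 1-Lipschitz retract of l∞⁴.
  intro A B _ _ i f hi hf
  have hf' : LipschitzWith 1 (fun a => (f a : Fin 4 → ℝ)) := by
    exact LipschitzWith.of_dist_le_mul fun a b => by simpa [Subtype.dist_eq] using hf.dist_le_mul a b
  obtain ⟨g, hg, hgi⟩ := linf_injective 4 A B i (fun a => (f a : Fin 4 → ℝ)) hi hf'
  refine ⟨fun b => ⟨r (g b), hmem _⟩, ?_, fun a => ?_⟩
  · exact LipschitzWith.subtype_mk ((hlip.comp hg).weaken (by norm_num)) _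
  · apply Subtype.ext
    simp only [hgi a]
    exact hfix _ (f a).2
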